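/- The Gauss map φ : (0,1] → [0,1), φ(x) = {1/x} (fractional part), preserves the Gauss measure dμ(x) = (1/ln 2) dx/(1+x): for every Borel set A ⊆ (0,1), μ(φ^{-1} A) = μ(A). -/

import Mathlib

open MeasureTheory

noncomputable def gaussMap (x : ℝ) : ℝ := if x = 0 then 0 else Int.fract x⁻¹

lemma aux_union (A : Set ℝ) (hA' : A ⊆ Set.Ioo (0 : ℝ) 1) :
    gaussMap ⁻¹' A ∩ Set.Ioo (0 : ℝ) 1 =
      ⋃ n : ℕ, (fun y : ℝ => ((n : ℝ) + 1 + y)⁻¹) '' A := by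
  ext x
  constructor
  · rintro ⟨hx, hx0, hx1⟩
    have hxne : x ≠ 0 := ne_of_gt hx0
    rw [Set.mem_preimage, gaussMap, if_neg hxne] at hx
    have h1 : 1 < x⁻¹ := one_lt_inv₀ hx0 |>.2 hx1
    have hfl : (1 : ℤ) ≤ ⌊x⁻¹⌋ := Int.le_floor.mpr (by exact_mod_cast h1.le)
    set m : ℕ := (⌊x⁻¹⌋ - 1).toNat with hm
    have hmz : ((m : ℤ) : ℝ) = (⌊x⁻¹⌋ : ℝ) - 1 := by
      rw [hm, Int.toNat_of_nonneg (by omega)]; push_cast; ring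
    refine Set.mem_iUnion.2 ⟨m, Int.fract x⁻¹, hx, ?_⟩
    have : (m : ℝ) + 1 + Int.fract x⁻¹ = x⁻¹ := by
      push_cast at hmz ⊢
      rw [hmz]
      have := Int.floor_add_fract x⁻¹
      linarith
    simp only [this, inv_inv]
  · intro hx
    obtain ⟨n, y, hy, rfl⟩ := Set.mem_iUnion.1 hx
    obtain ⟨hy0, hy1⟩ := hA' hy
    have hc1 : 1 < (n : ℝ) + 1 + y := by
      have : (0:ℝ) ≤ n := Nat.cast_nonneg n
      linarith
    have hc0 : (0:ℝ) < (n : ℝ) + 1 + y := by linarith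
    have hxne : ((n : ℝ) + 1 + y)⁻¹ ≠ 0 := by positivity
    refine ⟨?_, inv_pos.2 hc0, inv_lt_one_of_one_lt₀ hc1⟩
    rw [Set.mem_preimage, gaussMap, if_neg hxne, inv_inv]
    have : (n : ℝ) + 1 + y = ((n + 1 : ℤ) : ℝ) + y := by push_cast; ring
    rw [this, Int.fract_intCast_add, Int.fract_eq_self.2 ⟨hy0.le, hy1⟩]
    exact hy

-- each piece as a preimage (for measurability)
lemma aux_piece (A : Set ℝ) (hA' : A ⊆ Set.Ioo (0 : ℝ) 1) (n : ℕ) :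
    (fun y : ℝ => ((n : ℝ) + 1 + y)⁻¹) '' A =
      (fun x : ℝ => x⁻¹ - ((n : ℝ) + 1)) ⁻¹' A ∩ Set.Ioi (0 : ℝ) := by
  ext x
  constructor
  · rintro ⟨y, hy, rfl⟩
    obtain ⟨hy0, hy1⟩ := hA' hy
    have hc0 : (0:ℝ) < (n : ℝ) + 1 + y := by
      have : (0:ℝ) ≤ n := Nat.cast_nonneg n
      linarith
    constructor
    · rw [Set.mem_preimage, inv_inv]
      simpa using hy
    · exact inv_pos.2 hc0
  · rintro ⟨hx, hx0⟩
    rw [Set.mem_preimage] at hx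
    refine ⟨x⁻¹ - ((n : ℝ) + 1), hx, ?_⟩
    have : (n : ℝ) + 1 + (x⁻¹ - ((n : ℝ) + 1)) = x⁻¹ := by ring
    show ((n : ℝ) + 1 + (x⁻¹ - ((n : ℝ) + 1)))⁻¹ = x
    rw [this, inv_inv]

lemma aux_inv_range (A : Set ℝ) (hA' : A ⊆ Set.Ioo (0 : ℝ) 1) (n : ℕ) {x : ℝ}
    (hx : x ∈ (fun y : ℝ => ((n : ℝ) + 1 + y)⁻¹) '' A) :
    x⁻¹ ∈ Set.Ioo ((n : ℝ) + 1) ((n : ℝ) + 2) := by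
  obtain ⟨y, hy, rfl⟩ := hx
  obtain ⟨hy0, hy1⟩ := hA' hy
  have hc0 : (0:ℝ) < (n : ℝ) + 1 + y := by
    have : (0:ℝ) ≤ n := Nat.cast_nonneg n
    linarith
  rw [inv_inv]
  exact ⟨by linarith, by linarith⟩

lemma aux_disjoint (A : Set ℝ) (hA' : A ⊆ Set.Ioo (0 : ℝ) 1) :
    Pairwise (Function.onFun Disjoint (fun n : ℕ => (fun y : ℝ => ((n : ℝ) + 1 + y)⁻¹) '' A)) := by
  intro m n hmn
  rw [Function.onFun, Set.disjoint_left]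
  intro x hxm hxn
  have h1 := aux_inv_range A hA' m hxm
  have h2 := aux_inv_range A hA' n hxn
  have : m = n := by
    have hm1 := h1.1; have hm2 := h1.2; have hn1 := h2.1; have hn2 := h2.2
    have : (m:ℝ) < n + 1 := by linarith
    have h' : (n:ℝ) < m + 1 := by linarith
    have : m < n + 1 := by exact_mod_cast this
    have h' : n < m + 1 := by exact_mod_cast h'
    omega
  exact hmn this

lemma aux_cov (A : Set ℝ) (hA : MeasurableSet A) (hA' : A ⊆ Set.Ioo (0 : ℝ) 1) (n : ℕ) :
    ∫ x in (fun y : ℝ => ((n : ℝ) + 1 + y)⁻¹) '' A, (1 + x)⁻¹ =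
      ∫ y in A, (((n : ℝ) + 1 + y)⁻¹ - ((n : ℝ) + 2 + y)⁻¹) := by
  have hderiv : ∀ y ∈ A, HasDerivWithinAt (fun y : ℝ => ((n : ℝ) + 1 + y)⁻¹)
      (-1 / (((n : ℝ) + 1 + y) ^ 2)) A y := by
    intro y hy
    obtain ⟨hy0, hy1⟩ := hA' hy
    have hc0 : ((n : ℝ) + 1 + y) ≠ 0 := by positivity
    exact (((hasDerivAt_id y).const_add ((n:ℝ)+1)).inv hc0).hasDerivWithinAt
  have hinj : Set.InjOn (fun y : ℝ => ((n : ℝ) + 1 + y)⁻¹) A := by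
    intro y1 _ y2 _ h
    have := inv_inj.mp h
    linarith
  rw [integral_image_eq_integral_abs_deriv_smul hA hderiv hinj]
  refine setIntegral_congr_fun hA fun y hy => ?_
  obtain ⟨hy0, hy1⟩ := hA' hy
  have hc0 : (0:ℝ) < (n : ℝ) + 1 + y := by positivity
  have hc1 : (0:ℝ) < (n : ℝ) + 2 + y := by positivity
  have habs : |(-1 / (((n : ℝ) + 1 + y) ^ 2))| = (((n : ℝ) + 1 + y) ^ 2)⁻¹ := by
    rw [show (-1 / (((n : ℝ) + 1 + y) ^ 2)) = -((((n : ℝ) + 1 + y) ^ 2)⁻¹) by ring,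
      abs_neg, abs_of_pos (by positivity)]
  simp only [smul_eq_mul, habs]
  have h2 : (0:ℝ) < 1 + ((n : ℝ) + 1 + y)⁻¹ := by positivity
  field_simp
  ring

lemma aux_integrableOn (c : ℝ) (hc : 0 < c) {s : Set ℝ} (hs : s ⊆ Set.Icc 0 1) :
    IntegrableOn (fun y : ℝ => (c + y)⁻¹) s volume := by
  refine (ContinuousOn.integrableOn_Icc ?_).mono_set hs
  exact ContinuousOn.inv₀ (by fun_prop) (fun y hy => by nlinarith [hy.1])

theorem gauss_map_preserves_gauss_measure
    (A : Set ℝ) (hA : MeasurableSet A) (hA' : A ⊆ Set.Ioo (0 : ℝ) 1) :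
    (Real.log 2)⁻¹ * ∫ x in gaussMap ⁻¹' A ∩ Set.Ioo (0 : ℝ) 1, (1 + x)⁻¹ =
      (Real.log 2)⁻¹ * ∫ x in A, (1 + x)⁻¹ := by
  have hsubI : A ⊆ Set.Icc (0:ℝ) 1 := hA'.trans Set.Ioo_subset_Icc_self
  have hμA : volume A < ⊤ :=
    lt_of_le_of_lt (measure_mono hsubI) (by simp)
  congr 1
  have hSm : ∀ n : ℕ, MeasurableSet ((fun y : ℝ => ((n : ℝ) + 1 + y)⁻¹) '' A) := by
    intro n
    rw [aux_piece A hA' n]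
    exact ((measurable_inv.sub measurable_const) hA).inter measurableSet_Ioi
  have hint : IntegrableOn (fun x : ℝ => (1 + x)⁻¹)
      (⋃ n : ℕ, (fun y : ℝ => ((n : ℝ) + 1 + y)⁻¹) '' A) volume := by
    apply aux_integrableOn 1 one_pos
    rw [← aux_union A hA']
    exact (Set.inter_subset_right).trans Set.Ioo_subset_Icc_self
  have hsum1 := hasSum_integral_iUnion hSm (aux_disjoint A hA') hint
  rw [aux_union A hA']
  simp only [aux_cov A hA hA'] at hsum1
  -- partial sums
  have key : ∀ N : ℕ, ∑ n ∈ Finset.range N,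
      ∫ y in A, (((n : ℝ) + 1 + y)⁻¹ - ((n : ℝ) + 2 + y)⁻¹)
      = (∫ y in A, (1 + y)⁻¹) - ∫ y in A, ((N : ℝ) + 1 + y)⁻¹ := by
    intro N
    have h1 : ∀ n ∈ Finset.range N, IntegrableOn
        (fun y : ℝ => (((n : ℝ) + 1) + y)⁻¹ - (((n : ℝ) + 2) + y)⁻¹) A volume := by
      intro n _
      exact (aux_integrableOn ((n:ℝ)+1) (by positivity) hsubI).sub
        (aux_integrableOn ((n:ℝ)+2) (by positivity) hsubI)
    rw [← integral_finset_sum _ h1,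
      ← integral_sub (aux_integrableOn 1 one_pos hsubI)
        (aux_integrableOn ((N:ℝ)+1) (by positivity) hsubI)]
    refine setIntegral_congr_fun hA fun y hy => ?_
    have h := Finset.sum_range_sub' (f := fun n : ℕ => ((n : ℝ) + 1 + y)⁻¹) N
    push_cast at h
    rw [show ((1:ℝ)+y)⁻¹ = ((0:ℝ)+1+y)⁻¹ by norm_num, ← h]
    refine Finset.sum_congr rfl fun n _ => ?_
    ring_nf
  have ht0 : Filter.Tendsto (fun N : ℕ => ∫ y in A, ((N : ℝ) + 1 + y)⁻¹)
      Filter.atTop (nhds 0) := by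
    have hb : ∀ N : ℕ, ‖∫ y in A, ((N : ℝ) + 1 + y)⁻¹‖
        ≤ ((N : ℝ) + 1)⁻¹ * (volume A).toReal := fun N => by
      apply norm_setIntegral_le_of_norm_le_const hμA
      intro y hy
      obtain ⟨hy0, hy1⟩ := hA' hy
      rw [Real.norm_eq_abs, abs_of_pos (by positivity)]
      exact inv_anti₀ (by positivity) (by linarith)
    refine squeeze_zero_norm hb ?_
    have h := tendsto_one_div_add_atTop_nhds_zero_nat (𝕜 := ℝ)
    simpa [one_div] using h.mul_const (volume A).toReal
  have ht : Filter.Tendsto (fun N : ℕ => ∑ n ∈ Finset.range N,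
      ∫ y in A, (((n : ℝ) + 1 + y)⁻¹ - ((n : ℝ) + 2 + y)⁻¹))
      Filter.atTop (nhds (∫ y in A, (1 + y)⁻¹)) := by
    simp only [key]
    simpa using Filter.Tendsto.sub (tendsto_const_nhds) ht0
  exact tendsto_nhds_unique hsum1.tendsto_sum_nat ht
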